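/- The selection risk measure ρ_{s,0} is a set-valued coherent risk measure: for all set-valued portfolios 𝐗, 𝐘 possessing p-integrable selections, (i) ρ_{s,0}(𝐗) is a convex upper set (x ∈ ρ_{s,0}(𝐗) and y ≥ x coordinatewise imply y ∈ ρ_{s,0}(𝐗)); (ii) ρ_{s,0}(𝐗 + a) = ρ_{s,0}(𝐗) − a for every a ∈ ℝ^d; (iii) if 𝐗(ω) ⊆ 𝐘(ω) a.s. then ρ_{s,0}(𝐗) ⊆ ρ_{s,0}(𝐘); (iv) ρ_{s,0}(c𝐗) = c·ρ_{s,0}(𝐗) for every c > 0; (v) ρ_{s,0}(𝐗 ⊞ 𝐘) ⊇ ρ_{s,0}(𝐗) + ρ_{s,0}(𝐘), where 𝐗 ⊞ 𝐘 is the closed sum ω ↦ cl(𝐗(ω) + 𝐘(ω)). -/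

import Mathlib

open MeasureTheory Set Filter
open scoped Pointwise ENNReal RealInnerProductSpace

noncomputable section

/-- `ℝ^d` with the Euclidean norm. -/
abbrev Vec (d : ℕ) := EuclideanSpace ℝ (Fin d)

/-- Effros measurability of a set-valued map: `{ω : X(ω) ∩ G ≠ ∅}` is measurable
for every open `G`. -/
def EffrosMeasurable {Ω : Type*} [MeasurableSpace Ω] {d : ℕ} (X : Ω → Set (Vec d)) : Prop :=
  ∀ G : Set (Vec d), IsOpen G → MeasurableSet {ω | (X ω ∩ G).Nonempty}

/-- A set-valued portfolio: an Effros-measurable map with nonempty closed convex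
lower-set values. -/
structure IsPortfolio {Ω : Type*} [MeasurableSpace Ω] {d : ℕ} (X : Ω → Set (Vec d)) : Prop where
  effros : EffrosMeasurable X
  nonempty : ∀ ω, (X ω).Nonempty
  isClosed : ∀ ω, IsClosed (X ω)
  convex : ∀ ω, Convex ℝ (X ω)
  lower : ∀ ω, ∀ x ∈ X ω, ∀ y : Vec d, (∀ i, y i ≤ x i) → y ∈ X ω

/-- A coherent risk measure on `L^p(Ω; ℝ)` with values in `ℝ ∪ {+∞} ⊆ EReal`:
monotone (antitone in the gain), cash invariant, subadditive and positively homogeneous. -/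
structure IsCoherent {Ω : Type*} [MeasurableSpace Ω] (μ : Measure Ω) (p : ℝ≥0∞)
    (r : (Ω → ℝ) → EReal) : Prop where
  ne_bot : ∀ ξ : Ω → ℝ, MemLp ξ p μ → r ξ ≠ ⊥
  mono : ∀ ξ η : Ω → ℝ, MemLp ξ p μ → MemLp η p μ → (∀ᵐ ω ∂μ, ξ ω ≤ η ω) → r η ≤ r ξ
  cash : ∀ ξ : Ω → ℝ, MemLp ξ p μ → ∀ c : ℝ, r (fun ω => ξ ω + c) = r ξ - (c : EReal)
  subadd : ∀ ξ η : Ω → ℝ, MemLp ξ p μ → MemLp η p μ →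
    r (fun ω => ξ ω + η ω) ≤ r ξ + r η
  homog : ∀ ξ : Ω → ℝ, MemLp ξ p μ → ∀ c : ℝ, 0 < c →
    r (fun ω => c * ξ ω) = (c : EReal) * r ξ

/-- The selection risk measure `ρ_{s,0}(𝐗)`: the set of deterministic `x ∈ ℝ^d`
for which `𝐗 + x` has a selection with all individually acceptable components. -/
def rho0 {Ω : Type*} [MeasurableSpace Ω] (μ : Measure Ω) (p : ℝ≥0∞) {d : ℕ}
    (r : Fin d → (Ω → ℝ) → EReal) (X : Ω → Set (Vec d)) : Set (Vec d) :=
  {x | ∃ ξ : Ω → Vec d, MemLp ξ p μ ∧ (∀ᵐ ω ∂μ, ξ ω ∈ X ω) ∧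
        ∀ i, r i (fun ω => ξ ω i + x i) ≤ 0}

/-- Positive scalar multiplication preserves nonpositivity in `EReal`. -/
lemma ereal_coe_mul_nonpos_iff {c : ℝ} (hc : 0 < c) {x : EReal} :
    (c : EReal) * x ≤ 0 ↔ x ≤ 0 := by
  induction x with
  | bot => simp [EReal.mul_bot_of_pos (by exact_mod_cast hc : (0:EReal) < (c:EReal))]
  | coe x =>
      rw [← EReal.coe_mul, ← EReal.coe_zero, EReal.coe_le_coe_iff, EReal.coe_le_coe_iff]
      constructor <;> intro h <;> nlinarith
  | top => simp [EReal.coe_mul_top_of_pos hc]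

/-- Components of a `p`-integrable `ℝ^d`-valued map, shifted by a constant, are
`p`-integrable. -/
lemma memLp_comp_add {Ω : Type*} [MeasurableSpace Ω] {μ : Measure Ω} [IsFiniteMeasure μ]
    {p : ℝ≥0∞} {d : ℕ} {ξ : Ω → Vec d} (hξ : MemLp ξ p μ) (i : Fin d) (x : ℝ) :
    MemLp (fun ω => ξ ω i + x) p μ :=
  (((EuclideanSpace.proj i : Vec d →L[ℝ] ℝ).comp_memLp' hξ)).add (memLp_const x)

theorem statement2 {Ω : Type*} [MeasurableSpace Ω] (μ : Measure Ω) [IsProbabilityMeasure μ]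
    [μ.IsComplete] {d : ℕ} (p : ℝ≥0∞) (hp : 1 ≤ p)
    (r : Fin d → (Ω → ℝ) → EReal) (hr : ∀ i, IsCoherent μ p (r i))
    (X Y : Ω → Set (Vec d)) (hX : IsPortfolio X) (hY : IsPortfolio Y)
    (hXsel : ∃ ξ : Ω → Vec d, MemLp ξ p μ ∧ ∀ᵐ ω ∂μ, ξ ω ∈ X ω)
    (hYsel : ∃ η : Ω → Vec d, MemLp η p μ ∧ ∀ᵐ ω ∂μ, η ω ∈ Y ω) :
    -- (i) convex upper values
    (Convex ℝ (rho0 μ p r X) ∧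
      ∀ x ∈ rho0 μ p r X, ∀ y : Vec d, (∀ i, x i ≤ y i) → y ∈ rho0 μ p r X) ∧
    -- (ii) cash invariance
    (∀ a : Vec d,
      rho0 μ p r (fun ω => (· + a) '' X ω) = (fun x => x - a) '' rho0 μ p r X) ∧
    -- (iii) monotonicity
    ((∀ᵐ ω ∂μ, X ω ⊆ Y ω) → rho0 μ p r X ⊆ rho0 μ p r Y) ∧
    -- (iv) homogeneity
    (∀ c : ℝ, 0 < c → rho0 μ p r (fun ω => c • X ω) = c • rho0 μ p r X) ∧
    -- (v) subadditivity with respect to the closed sum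
    rho0 μ p r X + rho0 μ p r Y ⊆ rho0 μ p r (fun ω => closure (X ω + Y ω)) := by
  refine ⟨⟨?_, ?_⟩, ?_, ?_, ?_, ?_⟩
  · -- convexity
    rintro x hx y hy a b ha hb hab
    rcases eq_or_lt_of_le ha with rfl | ha'
    · have hb1 : b = 1 := by linarith
      simpa [hb1] using hy
    rcases eq_or_lt_of_le hb with rfl | hb'
    · have ha1 : a = 1 := by linarith
      simpa [ha1] using hx
    obtain ⟨ξ, hξm, hξs, hξr⟩ := hx
    obtain ⟨η, hηm, hηs, hηr⟩ := hy
    refine ⟨fun ω => a • ξ ω + b • η ω, (hξm.const_smul a).add (hηm.const_smul b),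
      (hξs.and hηs).mono fun ω ⟨h1, h2⟩ => hX.convex ω h1 h2 ha hb hab, fun i => ?_⟩
    have heq : (fun ω => (a • ξ ω + b • η ω) i + (a • x + b • y) i)
        = fun ω => a * (ξ ω i + x i) + b * (η ω i + y i) := by
      funext ω
      simp only [PiLp.add_apply, PiLp.smul_apply, smul_eq_mul]
      ring
    rw [heq]
    calc r i (fun ω => a * (ξ ω i + x i) + b * (η ω i + y i))
        ≤ r i (fun ω => a * (ξ ω i + x i)) + r i (fun ω => b * (η ω i + y i)) :=
          (hr i).subadd _ _ ((memLp_comp_add hξm i (x i)).const_mul a)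
            ((memLp_comp_add hηm i (y i)).const_mul b)
      _ ≤ 0 + 0 := by
          refine add_le_add ?_ ?_
          · rw [(hr i).homog _ (memLp_comp_add hξm i (x i)) a ha']
            exact (ereal_coe_mul_nonpos_iff ha').mpr (hξr i)
          · rw [(hr i).homog _ (memLp_comp_add hηm i (y i)) b hb']
            exact (ereal_coe_mul_nonpos_iff hb').mpr (hηr i)
      _ = 0 := by simp
  · -- upper set
    rintro x ⟨ξ, hξm, hξs, hξr⟩ y hxy
    refine ⟨ξ, hξm, hξs, fun i => ?_⟩
    refine le_trans ((hr i).mono _ _ (memLp_comp_add hξm i (x i)) (memLp_comp_add hξm i (y i))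
      (ae_of_all _ fun ω => by linarith [hxy i])) (hξr i)
  · -- cash invariance
    intro a
    ext x
    constructor
    · rintro ⟨ξ, hξm, hξs, hξr⟩
      refine ⟨x + a, ⟨fun ω => ξ ω - a, hξm.sub (memLp_const a), ?_, fun i => ?_⟩, add_sub_cancel_right x a⟩
      · refine hξs.mono fun ω h => ?_
        obtain ⟨z, hz, hz2⟩ := h
        show ξ ω - a ∈ X ω
        rw [← hz2]
        simpa using hz
      · have heq : (fun ω => (ξ ω - a) i + (x + a) i) = fun ω => ξ ω i + x i := by
          funext ω
          simp only [PiLp.sub_apply, PiLp.add_apply]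
          ring
        rw [heq]; exact hξr i
    · rintro ⟨y, ⟨ξ, hξm, hξs, hξr⟩, rfl⟩
      refine ⟨fun ω => ξ ω + a, hξm.add (memLp_const a),
        hξs.mono fun ω h => ⟨ξ ω, h, rfl⟩, fun i => ?_⟩
      have heq : (fun ω => (ξ ω + a) i + (y - a) i) = fun ω => ξ ω i + y i := by
        funext ω
        simp only [PiLp.sub_apply, PiLp.add_apply]
        ring
      rw [heq]; exact hξr i
  · -- monotonicity
    rintro h x ⟨ξ, hξm, hξs, hξr⟩
    exact ⟨ξ, hξm, (hξs.and h).mono fun ω ⟨h1, h2⟩ => h2 h1, hξr⟩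
  · -- homogeneity
    intro c hc
    have hc' : c ≠ 0 := hc.ne'
    ext x
    constructor
    · rintro ⟨ξ, hξm, hξs, hξr⟩
      refine ⟨c⁻¹ • x, ⟨fun ω => c⁻¹ • ξ ω, hξm.const_smul c⁻¹, hξs.mono fun ω h =>
        (mem_smul_set_iff_inv_smul_mem₀ hc' _ _).mp h, fun i => ?_⟩,
        smul_inv_smul₀ hc' x⟩
      have heq : (fun ω => (c⁻¹ • ξ ω) i + (c⁻¹ • x) i)
          = fun ω => c⁻¹ * (ξ ω i + x i) := by
        funext ω
        simp only [PiLp.smul_apply, smul_eq_mul]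
        ring
      rw [heq, (hr i).homog _ (memLp_comp_add hξm i (x i)) c⁻¹ (by positivity)]
      exact (ereal_coe_mul_nonpos_iff (by positivity)).mpr (hξr i)
    · rintro ⟨y, ⟨ξ, hξm, hξs, hξr⟩, rfl⟩
      refine ⟨fun ω => c • ξ ω, hξm.const_smul c, hξs.mono fun ω h =>
        smul_mem_smul_set h, fun i => ?_⟩
      have heq : (fun ω => (c • ξ ω) i + (c • y) i) = fun ω => c * (ξ ω i + y i) := by
        funext ω
        simp only [PiLp.smul_apply, smul_eq_mul]
        ring
      rw [heq, (hr i).homog _ (memLp_comp_add hξm i (y i)) c hc]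
      exact (ereal_coe_mul_nonpos_iff hc).mpr (hξr i)
  · -- subadditivity
    rintro z ⟨x, hx, y, hy, rfl⟩
    obtain ⟨ξ, hξm, hξs, hξr⟩ := hx
    obtain ⟨η, hηm, hηs, hηr⟩ := hy
    refine ⟨fun ω => ξ ω + η ω, hξm.add hηm,
      (hξs.and hηs).mono fun ω ⟨h1, h2⟩ => subset_closure (add_mem_add h1 h2), fun i => ?_⟩
    have heq : (fun ω => (ξ ω + η ω) i + (x + y) i)
        = fun ω => (ξ ω i + x i) + (η ω i + y i) := by
      funext ω
      simp only [PiLp.add_apply]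
      ring
    rw [heq]
    calc r i (fun ω => (ξ ω i + x i) + (η ω i + y i))
        ≤ r i (fun ω => ξ ω i + x i) + r i (fun ω => η ω i + y i) :=
          (hr i).subadd _ _ (memLp_comp_add hξm i (x i)) (memLp_comp_add hηm i (y i))
      _ ≤ 0 + 0 := add_le_add (hξr i) (hηr i)
      _ = 0 := by simp
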